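/- Let C be a symmetric monoidal category and F : C ⇄ D : G a symmetric monoidal adjunction (F strong symmetric monoidal) between symmetric monoidal categories. If the unit map 𝟙_C → G(F(𝟙_C)) is an isomorphism (equivalently A → (F A)-fixed object for the unit A = 𝟙), then the full subcategory T of objects X with invertible unit map X → G(F(X)) contains all dualizable objects of C. -/

import Mathlib

open CategoryTheory MonoidalCategory


open CategoryTheory MonoidalCategory Functor.LaxMonoidal Functor.OplaxMonoidal Category

namespace StmtAux

variable {C D : Type*} [Category C] [Category D] [MonoidalCategory C] [MonoidalCategory D]

lemma push_zig (F : C ⥤ D) [F.Monoidal] (A X : C) [ExactPairing A X] :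
    F.obj X ◁ (ε F ≫ F.map (η_ A X) ≫ δ F A X) ≫ (α_ (F.obj X) (F.obj A) (F.obj X)).inv ≫
      (μ F X A ≫ F.map (ε_ A X) ≫ η F) ▷ F.obj X =
    (ρ_ (F.obj X)).hom ≫ (λ_ (F.obj X)).inv := by
  have key : F.obj X ◁ δ F A X ≫ (α_ (F.obj X) (F.obj A) (F.obj X)).inv ≫ μ F X A ▷ F.obj X =
      μ F X (A ⊗ X) ≫ F.map (α_ X A X).inv ≫ δ F (X ⊗ A) X := by
    rw [Functor.Monoidal.map_associator_inv]
    simp only [assoc, Functor.Monoidal.μ_δ_assoc, Functor.Monoidal.μ_δ, comp_id]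
  simp only [MonoidalCategory.whiskerLeft_comp, comp_whiskerRight, assoc]
  slice_lhs 3 5 => rw [key]
  slice_lhs 2 3 => rw [μ_natural_right]
  slice_lhs 5 6 => rw [δ_natural_left]
  slice_lhs 3 5 => rw [← F.map_comp, ← F.map_comp, ExactPairing.coevaluation_evaluation]
  rw [F.map_comp, Functor.Monoidal.map_rightUnitor, Functor.Monoidal.map_leftUnitor_inv]
  simp only [assoc, Functor.Monoidal.μ_δ_assoc, Functor.Monoidal.μ_δ, comp_id]
  simp only [← MonoidalCategory.whiskerLeft_comp_assoc, ← comp_whiskerRight_assoc,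
    Functor.Monoidal.ε_η, Functor.Monoidal.η_ε]
  simp

end StmtAux

open StmtAux


/-- Let `F ⊣ G` be an adjunction between symmetric monoidal categories with `F` strong
symmetric monoidal.  If the unit map of the adjunction is an isomorphism at the monoidal
unit `𝟙_ C`, then the full subcategory of objects with invertible unit map contains every
dualizable object: the unit map is an isomorphism at every dualizable `X`. -/
theorem stmt2 {C D : Type*} [Category C] [Category D]
    [MonoidalCategory C] [SymmetricCategory C]
    [MonoidalCategory D] [SymmetricCategory D]
    (F : C ⥤ D) [F.Braided] (G : D ⥤ C) (adj : F ⊣ G)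
    (h1 : IsIso (adj.unit.app (𝟙_ C)))
    (X : C) [HasLeftDual X] :
    IsIso (adj.unit.app X) := by
  letI := adj.rightAdjointLaxMonoidal
  haveI : adj.IsMonoidal := inferInstance
  set A := ᘁX with hA
  set M := G.obj (F.obj X) with hM
  let ψ : M ⊗ A ⟶ 𝟙_ C :=
    (M ◁ adj.unit.app A) ≫ μ G (F.obj X) (F.obj A) ≫
      G.map (μ F X A) ≫ G.map (F.map (ε_ A X)) ≫ inv (adj.unit.app (𝟙_ C))
  let β : M ⟶ X :=
    (ρ_ M).inv ≫ (M ◁ η_ A X) ≫ (α_ M A X).inv ≫ (ψ ▷ X) ≫ (λ_ X).hom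
  have hmon : ∀ (P Q : C), (adj.unit.app P ⊗ₘ adj.unit.app Q) ≫ μ G (F.obj P) (F.obj Q) ≫
      G.map (μ F P Q) = adj.unit.app (P ⊗ Q) := by
    intro P Q
    have h := adj.unit_app_tensor_comp_map_δ P Q
    dsimp only [Functor.comp_obj, Functor.id_obj] at h ⊢
    slice_lhs 1 2 => rw [← h]
    rw [assoc, ← G.map_comp, Functor.Monoidal.δ_μ, G.map_id, comp_id]
  have hψ : adj.unit.app X ▷ A ≫ ψ = ε_ A X := by
    dsimp only [ψ]
    dsimp only [Functor.comp_obj, Functor.id_obj]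
    rw [← tensorHom_def_assoc, reassoc_of% (hmon X A), adj.unit_naturality_assoc (ε_ A X)]
    simp
  have h2 : adj.unit.app X ≫ β = 𝟙 X := by
    dsimp only [β]
    dsimp only [Functor.comp_obj, Functor.id_obj]
    rw [rightUnitor_inv_naturality_assoc, ← whisker_exchange_assoc,
      associator_inv_naturality_left_assoc, ← comp_whiskerRight_assoc, hψ]
    slice_lhs 2 4 => rw [ExactPairing.coevaluation_evaluation]
    simp
  haveI : IsIso (F.map (adj.unit.app (𝟙_ C))) := inferInstance
  have hw : F.map (inv (adj.unit.app (𝟙_ C))) = adj.counit.app (F.obj (𝟙_ C)) := by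
    rw [← cancel_epi (F.map (adj.unit.app (𝟙_ C))), ← F.map_comp, IsIso.hom_inv_id, F.map_id]
    erw [adj.left_triangle_components]
  have hφ : μ F M A ≫ F.map ψ ≫ η F =
      (adj.counit.app (F.obj X) ▷ F.obj A) ≫ μ F X A ≫ F.map (ε_ A X) ≫ η F := by
    dsimp only [ψ]
    simp only [F.map_comp, hw, assoc, Functor.comp_obj, Functor.id_obj]
    rw [adj.counit_naturality_assoc (F.map (ε_ A X)), adj.counit_naturality_assoc (μ F X A),
      adj.map_μ_comp_counit_app_tensor_assoc (F.obj X) (F.obj A), ← μ_natural_right_assoc,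
      Functor.Monoidal.μ_δ_assoc, tensorHom_def_assoc, whisker_exchange_assoc,
      ← MonoidalCategory.whiskerLeft_comp_assoc, adj.left_triangle_components,
      MonoidalCategory.whiskerLeft_id, id_comp]
  -- the transported zigzag identity in D
  have hzig : (ρ_ (F.obj X)).inv ≫ F.obj X ◁ ε F ≫ F.obj X ◁ F.map (η_ A X) ≫
      F.obj X ◁ δ F A X ≫ (α_ (F.obj X) (F.obj A) (F.obj X)).inv ≫ μ F X A ▷ F.obj X ≫
      F.map (ε_ A X) ▷ F.obj X ≫ η F ▷ F.obj X ≫ (λ_ (F.obj X)).hom = 𝟙 (F.obj X) := by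
    have h := push_zig F A X
    simp only [MonoidalCategory.whiskerLeft_comp, comp_whiskerRight, assoc] at h
    slice_lhs 2 8 => rw [h]
    simp
  have hφ' : (μ F M A ▷ F.obj X) ≫ (F.map ψ ▷ F.obj X) ≫ (η F ▷ F.obj X) =
      ((adj.counit.app (F.obj X) ▷ F.obj A) ▷ F.obj X) ≫ (μ F X A ▷ F.obj X) ≫
        (F.map (ε_ A X) ▷ F.obj X) ≫ (η F ▷ F.obj X) := by
    have := congrArg (fun t => t ▷ F.obj X) hφ
    simpa only [comp_whiskerRight, assoc] using this
  have hFβ : F.map β = adj.counit.app (F.obj X) := by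
    dsimp only [β]
    simp only [F.map_comp]
    rw [Functor.Monoidal.map_rightUnitor_inv, Functor.Monoidal.map_whiskerLeft,
      Functor.Monoidal.map_associator_inv, Functor.Monoidal.map_whiskerRight,
      Functor.Monoidal.map_leftUnitor]
    simp only [assoc, Functor.Monoidal.μ_δ_assoc]
    rw [reassoc_of% hφ']
    rw [← associator_inv_naturality_left_assoc, whisker_exchange_assoc,
      whisker_exchange_assoc, whisker_exchange_assoc, ← rightUnitor_inv_naturality_assoc]
    rw [hzig]
    simp
  have h3 : β ≫ adj.unit.app X = 𝟙 M := by
    apply (adj.homEquiv M (F.obj X)).symm.injective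
    simp [Adjunction.homEquiv_counit, hFβ]
  exact ⟨β, h2, h3⟩
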